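/- arXiv:1510.00473 — 2 statements merged into one kernel-verified Lean document; each statement's English description precedes it below -/
import Mathlib

section
/- Let h be a positive integer. There exists a positive integer k = k(h) such that if D is a finite digraph having a representation of the complete graph K_k, then D has a 5-eulerianizable subdigraph with a haven of order at least h + 1. -/
/-- A directed path in the digraph with adjacency relation `A`: a nonempty list of
distinct vertices in which each consecutive pair is joined by an edge directed forwards. -/
def IsDipath {V : Type*} (A : V → V → Prop) (l : List V) : Prop :=
  l ≠ [] ∧ l.Nodup ∧ l.Chain' A

/-- A directed path all of whose vertices lie in the set `S`. -/
def DipathIn {V : Type*} (A : V → V → Prop) (S : Set V) (l : List V) : Prop :=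
  IsDipath A l ∧ ∀ v ∈ l, v ∈ S

/-- A directed path from `u` to `v`. -/
def DipathFromTo {V : Type*} (A : V → V → Prop) (l : List V) (u v : V) : Prop :=
  IsDipath A l ∧ l.head? = some u ∧ l.getLast? = some v

/-- The digraph with adjacency `A` is strongly connected on the vertex set `S`:
any vertex of `S` can reach any other by a directed path staying inside `S`. -/
def StrongOn {V : Type*} (A : V → V → Prop) (S : Set V) : Prop :=
  ∀ u ∈ S, ∀ v ∈ S, ∃ l : List V, DipathIn A S l ∧ l.head? = some u ∧ l.getLast? = some v

/-- `C` is (the vertex set of) a strong component of the subdigraph induced on `W`: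
a maximal nonempty strongly connected subset of `W`. -/
def IsStrongComponent {V : Type*} (A : V → V → Prop) (W C : Set V) : Prop :=
  C ⊆ W ∧ C.Nonempty ∧ StrongOn A C ∧
    ∀ C' : Set V, C ⊆ C' → C' ⊆ W → StrongOn A C' → C' = C

/-- `B` is a haven of order `w` in the digraph with adjacency `A` and vertex set `S`:
for every `Z ⊆ S` with `|Z| < w`, `B Z` is a strong component of the digraph minus `Z`,
and `B Z ⊆ B Z'` whenever `Z' ⊆ Z` (the haven axiom). -/
def IsHavenOn {V : Type*} (A : V → V → Prop) (S : Set V) (w : ℕ) (B : Finset V → Set V) : Prop :=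
  ∀ Z : Finset V, ↑Z ⊆ S → Z.card < w →
    IsStrongComponent A (S \ ↑Z) (B Z) ∧ ∀ Z' : Finset V, Z' ⊆ Z → B Z ⊆ B Z'

/-- The digraph with adjacency `A` and vertex set `S` has a haven of order `w`. -/
def HasHavenOn {V : Type*} (A : V → V → Prop) (S : Set V) (w : ℕ) : Prop :=
  ∃ B : Finset V → Set V, IsHavenOn A S w B

/-- The digraph with adjacency `A` (on its whole vertex type) has a haven of order `w`. -/
def HasHaven {V : Type*} (A : V → V → Prop) (w : ℕ) : Prop :=
  HasHavenOn A Set.univ w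

/-- A linkage from the finite set `S` to the finite set `T`: for each `a ∈ S`,
`P a` is a directed path from `a` to `τ a ∈ T`, and the paths are pairwise vertex-disjoint
(so the ends `τ a` are distinct vertices of `T`). -/
def IsLinkage {V : Type*} (A : V → V → Prop) (S T : Finset V)
    (P : V → List V) (τ : V → V) : Prop :=
  (∀ a ∈ S, τ a ∈ T ∧ DipathFromTo A (P a) a (τ a)) ∧
  ∀ a₁ ∈ S, ∀ a₂ ∈ S, a₁ ≠ a₂ → ∀ v ∈ P a₁, v ∉ P a₂

/-- `X` is linked: for every `S, T ⊆ X` with `|S| = |T|` there is a linkage of `|S|`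
pairwise vertex-disjoint directed paths from `S` to `T`. -/
def Linked {V : Type*} (A : V → V → Prop) (X : Finset V) : Prop :=
  ∀ S T : Finset V, S ⊆ X → T ⊆ X → S.card = T.card →
    ∃ (P : V → List V) (τ : V → V), IsLinkage A S T P τ

/-- `(S, A')` is a subdigraph of the digraph with adjacency `A`: every edge of `A'`
is an edge of `A` with both ends in `S`. -/
def IsSubdigraph {V : Type*} (A : V → V → Prop) (S : Set V) (A' : V → V → Prop) : Prop :=
  ∀ u v, A' u v → A u v ∧ u ∈ S ∧ v ∈ S

/-- The digraph with adjacency `A` and vertex set `S` is `k`-eulerianizable: it is strongly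
connected and one can assign a positive multiplicity to each edge so that at every vertex the
total multiplicity of in-edges equals that of the out-edges and both are at most `k`. -/
def Eulerianizable {V : Type*} [Fintype V] (A : V → V → Prop) (S : Set V) (k : ℕ) : Prop :=
  StrongOn A S ∧ ∃ m : V → V → ℕ,
    (∀ u v, A u v → 1 ≤ m u v) ∧ (∀ u v, ¬ A u v → m u v = 0) ∧
    ∀ v ∈ S, (∑ u, m u v) = (∑ u, m v u) ∧ (∑ u, m v u) ≤ k

/-- A representation of the graph `G` in the digraph on `V` with adjacency `A`:
collections of pairwise vertex-disjoint strongly connected subdigraphs indexed by the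
vertices of `G`, and of pairwise vertex-disjoint `2`-eulerianizable subdigraphs indexed
by the edges of `G`, such that the subdigraph of each edge shares a vertex with the
subdigraph of each of its two ends. -/
structure DigraphRep (V : Type*) [Fintype V] (A : V → V → Prop)
    {W : Type*} (G : SimpleGraph W) where
  vS : W → Set V
  vA : W → V → V → Prop
  eS : Sym2 W → Set V
  eA : Sym2 W → V → V → Prop
  vSub : ∀ w, IsSubdigraph A (vS w) (vA w)
  vNonempty : ∀ w, (vS w).Nonempty
  vStrong : ∀ w, StrongOn (vA w) (vS w)
  vDisj : ∀ w w', w ≠ w' → Disjoint (vS w) (vS w')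
  eSub : ∀ e ∈ G.edgeSet, IsSubdigraph A (eS e) (eA e)
  eNonempty : ∀ e ∈ G.edgeSet, (eS e).Nonempty
  eEul : ∀ e ∈ G.edgeSet, Eulerianizable (eA e) (eS e) 2
  eDisj : ∀ e ∈ G.edgeSet, ∀ e' ∈ G.edgeSet, e ≠ e' → Disjoint (eS e) (eS e')
  meets : ∀ e ∈ G.edgeSet, ∀ w ∈ e, (eS e ∩ vS w).Nonempty

/-- The representation is faithful: the subdigraph of each edge is vertex-disjoint from
the subdigraph of every vertex of `G` that is not an end of that edge. -/
def DigraphRep.Faithful {V W : Type*} [Fintype V] {A : V → V → Prop}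
    {G : SimpleGraph W} (R : DigraphRep V A G) : Prop :=
  ∀ e ∈ G.edgeSet, ∀ w, w ∉ e → Disjoint (R.eS e) (R.vS w)

namespace S7
variable {V : Type*} {A A₂ : V → V → Prop} {S S' W W' : Set V} {u v w x y : V}

/-- Reachability by a dipath inside `S`. -/
def Reach (A : V → V → Prop) (S : Set V) (u v : V) : Prop :=
  ∃ l : List V, DipathIn A S l ∧ l.head? = some u ∧ l.getLast? = some v

theorem strongOn_iff_reach : StrongOn A S ↔ ∀ u ∈ S, ∀ v ∈ S, Reach A S u v := Iff.rfl

theorem Reach.mem_left (h : Reach A S u v) : u ∈ S := by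
  obtain ⟨l, hl, hh, -⟩ := h
  exact hl.2 u (List.mem_of_mem_head? (by rw [hh]; rfl))

theorem Reach.mem_right (h : Reach A S u v) : v ∈ S := by
  obtain ⟨l, hl, -, hg⟩ := h
  exact hl.2 v (List.mem_of_mem_getLast? (by rw [hg]; rfl))

theorem reach_refl (hu : u ∈ S) : Reach A S u u :=
  ⟨[u], ⟨⟨by simp, by simp, by simp [List.Chain']⟩, by simpa⟩, rfl, rfl⟩

theorem reach_mono_set (hS : S ⊆ S') (h : Reach A S u v) : Reach A S' u v := by
  obtain ⟨l, ⟨hp, hm⟩, hh, hg⟩ := h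
  exact ⟨l, ⟨hp, fun x hx => hS (hm x hx)⟩, hh, hg⟩

theorem reach_mono_adj (hA : ∀ a b, A a b → A₂ a b) (h : Reach A S u v) : Reach A₂ S u v := by
  obtain ⟨l, ⟨⟨h1, h2, h3⟩, hm⟩, hh, hg⟩ := h
  exact ⟨l, ⟨⟨h1, h2, h3.imp hA⟩, hm⟩, hh, hg⟩

theorem strongOn_mono_adj (hA : ∀ a b, A a b → A₂ a b) (h : StrongOn A S) : StrongOn A₂ S :=
  fun a ha b hb => reach_mono_adj hA (h a ha b hb)

/-- Extract a dipath from a walk (chain). -/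
theorem exists_dipath_of_chain' :
    ∀ l : List V, l ≠ [] → l.Chain' A →
      ∃ p : List V, p ≠ [] ∧ p.Nodup ∧ p.Chain' A ∧ (∀ a ∈ p, a ∈ l) ∧
        p.head? = l.head? ∧ p.getLast? = l.getLast? := by
  intro l
  induction l with
  | nil => intro h; exact absurd rfl h
  | cons a t ih =>
    intro _ hc
    rcases t.eq_nil_or_concat with rfl | _
    · exact ⟨[a], by simp, by simp, by simp [List.Chain'], by simp, rfl, rfl⟩
    have ht : t ≠ [] := by rintro rfl; simp_all
    obtain ⟨p, hp0, hpn, hpc, hpm, hph, hpg⟩ := ih ht (List.isChain_cons.1 hc).2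
    by_cases hap : a ∈ p
    · obtain ⟨s, t', rfl⟩ := List.append_of_mem hap
      refine ⟨a :: t', by simp, ?_, ?_, ?_, rfl, ?_⟩
      · exact hpn.sublist ((List.suffix_append s (a :: t')).sublist)
      · exact hpc.infix ⟨s, [], by simp⟩
      · intro b hb
        rcases List.mem_cons.1 hb with rfl | hb
        · exact List.mem_cons_self
        · exact List.mem_cons_of_mem _ (hpm b (by simp [hb]))
      · obtain ⟨c, q, rfl⟩ : ∃ c q, t = c :: q := by
          cases t with | nil => exact absurd rfl ht | cons c q => exact ⟨c, q, rfl⟩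
        rw [List.getLast?_cons_cons, ← hpg, List.getLast?_append,
          Option.or_of_isSome (by simp [List.getLast?_isSome])]
    · refine ⟨a :: p, by simp, by simp [hpn, hap], ?_, ?_, rfl, ?_⟩
      · refine List.isChain_cons.2 ⟨?_, hpc⟩
        intro b hb
        have : b ∈ t.head? := by rw [← hph]; exact hb
        obtain ⟨c, t2, rfl⟩ : ∃ c t2, t = c :: t2 := by
          cases t with | nil => exact absurd rfl ht | cons c t2 => exact ⟨c, t2, rfl⟩
        cases this
        exact (List.isChain_cons_cons.1 hc).1
      · intro b hb
        rcases List.mem_cons.1 hb with rfl | hb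
        · exact List.mem_cons_self
        · exact List.mem_cons_of_mem _ (hpm b hb)
      · obtain ⟨c, q, rfl⟩ : ∃ c q, t = c :: q := by
          cases t with | nil => exact absurd rfl ht | cons c q => exact ⟨c, q, rfl⟩
        rw [List.getLast?_cons_cons, ← hpg]
        obtain ⟨c', q', rfl⟩ : ∃ c' q', p = c' :: q' := by
          cases p with | nil => exact absurd rfl hp0 | cons c' q' => exact ⟨c', q', rfl⟩
        rw [List.getLast?_cons_cons]

theorem Reach.trans (h1 : Reach A S u v) (h2 : Reach A S v w) : Reach A S u w := by
  obtain ⟨l₁, ⟨⟨l1ne, -, l1c⟩, l1m⟩, l1h, l1g⟩ := h1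
  obtain ⟨l₂, ⟨⟨l2ne, -, l2c⟩, l2m⟩, l2h, l2g⟩ := h2
  have hl₂ : l₂ = v :: l₂.tail := by
    cases l₂ with | nil => exact absurd rfl l2ne | cons c q => cases l2h; rfl
  have hcc : (l₁ ++ l₂.tail).Chain' A := by
    refine List.isChain_append.2 ⟨l1c, ?_, ?_⟩
    · conv_rhs at l2c => rw [hl₂]
      exact (List.isChain_cons.1 l2c).2
    · intro x hx y hy
      have hx' : x = v := by rw [l1g] at hx; cases hx; rfl
      subst hx'
      conv at l2c => rw [hl₂]
      exact (List.isChain_cons.1 l2c).1 y hy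
  obtain ⟨p, hp0, hpn, hpc, hpm, hph, hpg⟩ :=
    exists_dipath_of_chain' (l₁ ++ l₂.tail) (by simp [l1ne]) hcc
  refine ⟨p, ⟨⟨hp0, hpn, hpc⟩, ?_⟩, ?_, ?_⟩
  · intro a ha
    rcases List.mem_append.1 (hpm a ha) with h | h
    · exact l1m a h
    · exact l2m a (by rw [hl₂]; exact List.mem_cons_of_mem _ h)
  · rw [hph, List.head?_append_of_ne_nil _ l1ne, l1h]
  · rw [hpg, List.getLast?_append]
    cases htl2 : l₂.tail with
    | nil =>
      have : w = v := by
        rw [hl₂, htl2] at l2g; cases l2g; rfl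
      subst this; simp [l1g]
    | cons c q =>
      have h2 : l₂.tail.getLast? = some w := by
        rw [← l2g]
        conv_rhs => rw [hl₂, htl2, List.getLast?_cons_cons]
        rw [htl2]
      rw [htl2] at h2
      rw [h2]
      rfl

theorem reach_of_adj (huv : A u v) (hu : u ∈ S) (hv : v ∈ S) : Reach A S u v := by
  by_cases h : u = v
  · subst h; exact reach_refl hu
  · exact ⟨[u, v], ⟨⟨by simp, by simp [h], by simp [List.Chain', huv]⟩, by simp [hu, hv]⟩, rfl, rfl⟩

/-- Splitting a dipath at an intermediate vertex. -/
theorem reach_of_dipathIn_mem {l : List V} (hl : DipathIn A S l) (hy : y ∈ l)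
    (hh : l.head? = some u) (hg : l.getLast? = some v) :
    Reach A S u y ∧ Reach A S y v := by
  obtain ⟨⟨hne, hnd, hc⟩, hm⟩ := hl
  obtain ⟨s, t, rfl⟩ := List.append_of_mem hy
  constructor
  · refine ⟨s ++ [y], ⟨⟨by simp, ?_, ?_⟩, ?_⟩, ?_, by simp⟩
    · exact hnd.sublist (by simpa using (s ++ [y]).sublist_append_left t : _)
    · exact hc.infix ⟨[], t, by simp⟩
    · intro a ha
      refine hm a ?_
      rcases List.mem_append.1 ha with h | h
      · exact List.mem_append_left _ h
      · simp at h; subst h; exact hy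
    · rw [← hh]
      cases s with
      | nil => rfl
      | cons c q => simp
  · refine ⟨y :: t, ⟨⟨by simp, ?_, ?_⟩, ?_⟩, rfl, ?_⟩
    · exact hnd.sublist ((List.suffix_append s (y :: t)).sublist)
    · exact hc.infix ⟨s, [], by simp⟩
    · intro a ha
      exact hm a (by simpa using Or.inr (List.mem_cons.1 ha))
    · rw [← hg, List.getLast?_append,
        Option.or_of_isSome (by simp [List.getLast?_isSome])]

theorem reach_of_reach_dipath_mem {l : List V} (hxu : Reach A S x u) (hl : DipathIn A S l)
    (hh : l.head? = some u) (hg : l.getLast? = some v) (hy : y ∈ l) (hvx : Reach A S v x) :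
    Reach A S x y ∧ Reach A S y x := by
  obtain ⟨h1, h2⟩ := reach_of_dipathIn_mem hl hy hh hg
  exact ⟨hxu.trans h1, h2.trans hvx⟩

theorem pairGlue (h1 : StrongOn A S) (h2 : StrongOn A S') (hne : (S ∩ S').Nonempty) :
    StrongOn A (S ∪ S') := by
  obtain ⟨z, hz1, hz2⟩ := hne
  have key : ∀ a ∈ S ∪ S', Reach A (S ∪ S') a z ∧ Reach A (S ∪ S') z a := by
    intro a ha
    rcases ha with ha | ha
    · exact ⟨reach_mono_set Set.subset_union_left (h1 a ha z hz1),
        reach_mono_set Set.subset_union_left (h1 z hz1 a ha)⟩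
    · exact ⟨reach_mono_set Set.subset_union_right (h2 a ha z hz2),
        reach_mono_set Set.subset_union_right (h2 z hz2 a ha)⟩
  intro a ha b hb
  exact (key a ha).1.trans (key b hb).2

end S7


namespace S7
variable {V : Type*} {A : V → V → Prop} {S W W' : Set V} {u v x x' y : V}

/-- The strong component of `W` containing `x`. -/
def CompAt (A : V → V → Prop) (W : Set V) (x : V) : Set V :=
  {v | v ∈ W ∧ Reach A W x v ∧ Reach A W v x}

theorem mem_compAt_self (hx : x ∈ W) : x ∈ CompAt A W x :=
  ⟨hx, reach_refl hx, reach_refl hx⟩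

theorem isStrongComponent_compAt (hx : x ∈ W) :
    IsStrongComponent A W (CompAt A W x) := by
  refine ⟨fun v hv => hv.1, ⟨x, mem_compAt_self hx⟩, ?_, ?_⟩
  · intro a ha b hb
    obtain ⟨l, hl, hh, hg⟩ := (ha.2.2.trans hb.2.1 : Reach A W a b)
    refine ⟨l, ⟨hl.1, ?_⟩, hh, hg⟩
    intro z hz
    obtain ⟨h1, h2⟩ := reach_of_dipathIn_mem hl hz hh hg
    exact ⟨hl.2 z hz, ha.2.1.trans h1, h2.trans hb.2.2⟩
  · intro C' hsub hCW hstrong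
    refine Set.Subset.antisymm (fun v hv => ?_) hsub
    have hxC : x ∈ C' := hsub (mem_compAt_self hx)
    exact ⟨hCW hv, reach_mono_set hCW (hstrong x hxC v hv),
      reach_mono_set hCW (hstrong v hv x hxC)⟩

theorem compAt_subset_compAt (hWW : W ⊆ W') (h1 : Reach A W' x' x) (h2 : Reach A W' x x') :
    CompAt A W x ⊆ CompAt A W' x' := by
  intro v hv
  exact ⟨hWW hv.1, h1.trans (reach_mono_set hWW hv.2.1),
    (reach_mono_set hWW hv.2.2).trans h2⟩

section Count
variable [DecidableEq V] [Fintype V]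

theorem sum_count_fst (l : List (V × V)) (v : V) :
    ∑ u : V, l.count (v, u) = (l.map Prod.fst).count v := by
  induction l with
  | nil => simp
  | cons a l ih =>
    obtain ⟨a1, a2⟩ := a
    simp only [List.count_cons, List.map_cons, Finset.sum_add_distrib, ih]
    congr 1
    simp only [beq_iff_eq, Prod.mk.injEq]
    by_cases h : a1 = v <;> simp [h, Finset.sum_ite_eq]

theorem sum_count_snd (l : List (V × V)) (v : V) :
    ∑ u : V, l.count (u, v) = (l.map Prod.snd).count v := by
  induction l with
  | nil => simp
  | cons a l ih =>
    obtain ⟨a1, a2⟩ := a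
    simp only [List.count_cons, List.map_cons, Finset.sum_add_distrib, ih]
    congr 1
    simp only [beq_iff_eq, Prod.mk.injEq]
    by_cases h : a2 = v <;> simp [h, Finset.sum_ite_eq, and_comm]

end Count

theorem zip_tail_map_fst : ∀ l : List V, (l.zip l.tail).map Prod.fst = l.dropLast := by
  intro l
  induction l with
  | nil => simp
  | cons a t ih =>
    cases t with
    | nil => simp
    | cons b q =>
      simp only [List.tail_cons, List.zip_cons_cons, List.map_cons]
      rw [show (b :: q).zip q = (b :: q).zip (b :: q).tail from rfl, ih]
      simp

theorem zip_tail_map_snd : ∀ l : List V, (l.zip l.tail).map Prod.snd = l.tail := by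
  intro l
  induction l with
  | nil => simp
  | cons a t ih =>
    cases t with
    | nil => simp
    | cons b q =>
      simp only [List.tail_cons, List.zip_cons_cons, List.map_cons]
      rw [show (b :: q).zip q = (b :: q).zip (b :: q).tail from rfl, ih]
      rfl

theorem mem_of_mem_zip_tail {l : List V} {a b : V} (h : (a, b) ∈ l.zip l.tail) :
    a ∈ l ∧ b ∈ l := by
  constructor
  · have := List.mem_map_of_mem (f := Prod.fst) h
    rw [zip_tail_map_fst] at this
    exact List.dropLast_subset l this
  · have := List.mem_map_of_mem (f := Prod.snd) h
    rw [zip_tail_map_snd] at this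
    exact List.tail_subset l this

theorem adj_of_mem_zip_tail {B : V → V → Prop} {l : List V} (hc : l.Chain' B) {a b : V}
    (h : (a, b) ∈ l.zip l.tail) : B a b := by
  induction l with
  | nil => simp at h
  | cons c t ih =>
    cases t with
    | nil => simp at h
    | cons d q =>
      rw [List.tail_cons, List.zip_cons_cons, List.mem_cons] at h
      rcases h with h | h
      · cases h; exact (List.isChain_cons_cons.1 hc).1
      · exact ih (List.isChain_cons_cons.1 hc).2 h

theorem chain'_of_forall_zip_tail {B : V → V → Prop} {l : List V}
    (h : ∀ a b, (a, b) ∈ l.zip l.tail → B a b) : l.Chain' B := by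
  induction l with
  | nil => simp [List.Chain']
  | cons c t ih =>
    cases t with
    | nil => simp [List.Chain']
    | cons d q =>
      refine List.isChain_cons_cons.2 ⟨h c d (by simp), ih ?_⟩
      intro a b hab
      exact h a b (by rw [List.tail_cons, List.zip_cons_cons]; exact List.mem_cons_of_mem _ hab)

/-- sum over a family with at most one nonzero term, each bounded by c. -/
theorem sum_le_of_unique {ι : Type*} [Fintype ι] {f : ι → ℕ} {c : ℕ}
    (huniq : ∀ i j, f i ≠ 0 → f j ≠ 0 → i = j) (hbd : ∀ i, f i ≤ c) :
    ∑ i, f i ≤ c := by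
  by_cases hex : ∃ i, f i ≠ 0
  · obtain ⟨i₀, hi₀⟩ := hex
    rw [Finset.sum_eq_single i₀]
    · exact hbd i₀
    · intro j _ hj
      by_contra hfj
      exact hj (huniq j i₀ hfj hi₀)
    · intro hi; exact absurd (Finset.mem_univ i₀) hi
  · push_neg at hex
    simp [hex]
end S7

namespace S7

def nn (h : ℕ) : ℕ := 2 * h + 4

instance (h : ℕ) : NeZero (nn h) := ⟨by simp [nn]⟩

abbrev Hv (h : ℕ) := ZMod (nn h) × ZMod (nn h) × Bool
abbrev EIdx (h : ℕ) := Fin 3 × ZMod (nn h) × ZMod (nn h)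

noncomputable def kk (h : ℕ) : ℕ := Fintype.card (Hv h)

noncomputable def ι (h : ℕ) : Hv h ≃ Fin (kk h) := Fintype.equivFin _

lemma kk_pos (h : ℕ) : 0 < kk h := Fintype.card_pos

lemma fin3 : ∀ c : Fin 3, c = 0 ∨ c = 1 ∨ c = 2 := by decide

variable {h : ℕ}

lemma zone_ne : (1 : ZMod (nn h)) ≠ 0 := by
  intro hc
  rw [show (1 : ZMod (nn h)) = ((1 : ℕ) : ZMod (nn h)) by simp] at hc
  rw [ZMod.natCast_eq_zero_iff] at hc
  have := Nat.le_of_dvd one_pos hc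
  simp [nn] at this

lemma ztwo_ne : (2 : ZMod (nn h)) ≠ 0 := by
  intro hc
  rw [show (2 : ZMod (nn h)) = ((2 : ℕ) : ZMod (nn h)) by simp] at hc
  rw [ZMod.natCast_eq_zero_iff] at hc
  have := Nat.le_of_dvd two_pos hc
  simp [nn] at this

lemma zadd1_ne (a : ZMod (nn h)) : a + 1 ≠ a := by
  intro hc
  exact zone_ne (by linear_combination hc)

lemma zadd2_ne (a : ZMod (nn h)) : a + 1 + 1 ≠ a := by
  intro hc
  exact ztwo_ne (h := h) (by linear_combination hc)

def ends : EIdx h → Hv h × Hv h := fun t =>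
  if t.1 = 0 then ((t.2.1, t.2.2, false), (t.2.1, t.2.2 + 1, false))
  else if t.1 = 1 then ((t.2.1, t.2.2, true), (t.2.1 + 1, t.2.2, true))
  else ((t.2.1, t.2.2, false), (t.2.1, t.2.2, true))

@[simp] lemma ends0 (i j : ZMod (nn h)) :
    ends ((0 : Fin 3), i, j) = ((i, j, false), (i, j + 1, false)) := rfl
@[simp] lemma ends1 (i j : ZMod (nn h)) :
    ends ((1 : Fin 3), i, j) = ((i, j, true), (i + 1, j, true)) := rfl
@[simp] lemma ends2 (i j : ZMod (nn h)) :
    ends ((2 : Fin 3), i, j) = ((i, j, false), (i, j, true)) := rfl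

lemma ends_ne (t : EIdx h) : (ends t).1 ≠ (ends t).2 := by
  obtain ⟨c, i, j⟩ := t
  rcases fin3 c with rfl | rfl | rfl <;> simp [ends, Prod.ext_iff] <;> exact zone_ne

lemma ends_inj {t t' : EIdx h}
    (hor : ((ends t).1 = (ends t').1 ∧ (ends t).2 = (ends t').2) ∨
      ((ends t).1 = (ends t').2 ∧ (ends t).2 = (ends t').1)) : t = t' := by
  obtain ⟨c, i, j⟩ := t
  obtain ⟨c', i', j'⟩ := t'
  rcases fin3 c with rfl | rfl | rfl <;> rcases fin3 c' with rfl | rfl | rfl <;>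
      simp [ends, Prod.ext_iff] at hor ⊢
  · rcases hor with h | ⟨⟨h1, h2⟩, h3, h4⟩
    · exact h
    · exact absurd (show j' + 1 + 1 = j' by linear_combination h4 - h2) (zadd2_ne j')
  · rcases hor with h | ⟨⟨h1, h2⟩, h3, h4⟩
    · exact h
    · exact absurd (show i' + 1 + 1 = i' by linear_combination h3 - h1) (zadd2_ne i')
  · exact hor

/-- incident edge indices of a vertex -/
def eI : Hv h → Fin 3 → EIdx h := fun p d =>
  if p.2.2 then
    (if d = 0 then ((1 : Fin 3), p.1, p.2.1)
     else if d = 1 then ((1 : Fin 3), p.1 - 1, p.2.1)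
     else ((2 : Fin 3), p.1, p.2.1))
  else
    (if d = 0 then ((0 : Fin 3), p.1, p.2.1)
     else if d = 1 then ((0 : Fin 3), p.1, p.2.1 - 1)
     else ((2 : Fin 3), p.1, p.2.1))

@[simp] lemma eI_f0 (i j : ZMod (nn h)) : eI (i, j, false) 0 = ((0 : Fin 3), i, j) := rfl
@[simp] lemma eI_f1 (i j : ZMod (nn h)) : eI (i, j, false) 1 = ((0 : Fin 3), i, j - 1) := rfl
@[simp] lemma eI_f2 (i j : ZMod (nn h)) : eI (i, j, false) 2 = ((2 : Fin 3), i, j) := rfl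
@[simp] lemma eI_t0 (i j : ZMod (nn h)) : eI (i, j, true) 0 = ((1 : Fin 3), i, j) := rfl
@[simp] lemma eI_t1 (i j : ZMod (nn h)) : eI (i, j, true) 1 = ((1 : Fin 3), i - 1, j) := rfl
@[simp] lemma eI_t2 (i j : ZMod (nn h)) : eI (i, j, true) 2 = ((2 : Fin 3), i, j) := rfl

lemma eI_mem (p : Hv h) (d : Fin 3) :
    p = (ends (eI p d)).1 ∨ p = (ends (eI p d)).2 := by
  obtain ⟨i, j, b⟩ := p
  cases b <;> rcases fin3 d with rfl | rfl | rfl <;> simp [Prod.ext_iff]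

end S7

namespace S7
section Construction
variable {h : ℕ} {V : Type} [Fintype V] [DecidableEq V] {A : V → V → Prop}

noncomputable def sym (t : EIdx h) : Sym2 (Fin (kk h)) := s(ι h (ends t).1, ι h (ends t).2)

lemma sym_mem (t : EIdx h) : sym t ∈ (⊤ : SimpleGraph (Fin (kk h))).edgeSet := by
  simp only [sym, SimpleGraph.mem_edgeSet, SimpleGraph.top_adj]
  exact (ι h).injective.ne (ends_ne t)

lemma sym_inj : Function.Injective (sym (h := h)) := by
  intro t t' he
  rw [sym, sym, Sym2.eq_iff] at he
  refine ends_inj (he.imp ?_ ?_) <;>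
    exact fun hx => ⟨(ι h).injective hx.1, (ι h).injective hx.2⟩

variable (R : DigraphRep V A (⊤ : SimpleGraph (Fin (kk h))))

lemma mpt_aux (t : EIdx h) (p : Hv h) (hp : p = (ends t).1 ∨ p = (ends t).2) :
    (R.eS (sym t) ∩ R.vS (ι h p)).Nonempty := by
  refine R.meets (sym t) (sym_mem t) (ι h p) ?_
  rw [sym, Sym2.mem_iff]
  exact hp.imp (congrArg _) (congrArg _)

noncomputable def mpt (t : EIdx h) (p : Hv h)
    (hp : p = (ends t).1 ∨ p = (ends t).2) : V :=
  (mpt_aux R t p hp).some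

lemma mpt_mem (t : EIdx h) (p : Hv h) (hp : p = (ends t).1 ∨ p = (ends t).2) :
    mpt R t p hp ∈ R.eS (sym t) ∩ R.vS (ι h p) :=
  Set.Nonempty.some_mem _

noncomputable def term (p : Hv h) (d : Fin 3) : V := mpt R (eI p d) p (eI_mem p d)

lemma term_mem_vS (p : Hv h) (d : Fin 3) : term R p d ∈ R.vS (ι h p) :=
  (mpt_mem R _ _ _).2

lemma term_mem_eS (p : Hv h) (d : Fin 3) : term R p d ∈ R.eS (sym (eI p d)) :=
  (mpt_mem R _ _ _).1

noncomputable def pf (p : Hv h) (d : Fin 3) : List V :=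
  (R.vStrong (ι h p) (term R p d) (term_mem_vS R p d)
    (term R p (d + 1)) (term_mem_vS R p (d + 1))).choose

lemma pf_spec (p : Hv h) (d : Fin 3) :
    DipathIn (R.vA (ι h p)) (R.vS (ι h p)) (pf R p d) ∧
      (pf R p d).head? = some (term R p d) ∧
      (pf R p d).getLast? = some (term R p (d + 1)) :=
  (R.vStrong (ι h p) (term R p d) (term_mem_vS R p d)
    (term R p (d + 1)) (term_mem_vS R p (d + 1))).choose_spec

def wset (p : Hv h) : Set V := {v | ∃ d, v ∈ pf R p d}

lemma wset_sub_vS (p : Hv h) : wset R p ⊆ R.vS (ι h p) := by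
  rintro v ⟨d, hd⟩
  exact (pf_spec R p d).1.2 v hd

lemma term_mem_wset (p : Hv h) (d : Fin 3) : term R p d ∈ wset R p :=
  ⟨d, List.mem_of_mem_head? (by rw [(pf_spec R p d).2.1]; rfl)⟩

noncomputable def mW (p : Hv h) (u v : V) : ℕ :=
  ∑ d : Fin 3, ((pf R p d).zip (pf R p d).tail).count (u, v)

noncomputable def mE (t : EIdx h) : V → V → ℕ :=
  (R.eEul (sym t) (sym_mem t)).2.choose

lemma mE_spec (t : EIdx h) :
    (∀ u v, R.eA (sym t) u v → 1 ≤ mE R t u v) ∧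
      (∀ u v, ¬ R.eA (sym t) u v → mE R t u v = 0) ∧
      ∀ v ∈ R.eS (sym t), (∑ u, mE R t u v) = (∑ u, mE R t v u) ∧ (∑ u, mE R t v u) ≤ 2 :=
  (R.eEul (sym t) (sym_mem t)).2.choose_spec

noncomputable def mT (u v : V) : ℕ :=
  (∑ p : Hv h, mW R p u v) + ∑ t : EIdx h, mE R t u v

def Adj' (u v : V) : Prop := 0 < mT R u v

def SS : Set V := {v | (∃ p : Hv h, v ∈ wset R p) ∨ ∃ t : EIdx h, v ∈ R.eS (sym t)}

lemma adj'_of_mW {p : Hv h} {u v : V} (hp : 0 < mW R p u v) : Adj' R u v := by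
  have h1 : mW R p u v ≤ ∑ q : Hv h, mW R q u v :=
    Finset.single_le_sum (f := fun q => mW R q u v) (fun q _ => Nat.zero_le _)
      (Finset.mem_univ p)
  exact Nat.lt_of_lt_of_le hp (le_trans h1 (Nat.le_add_right _ _))

lemma adj'_of_mE {t : EIdx h} {u v : V} (ht : 0 < mE R t u v) : Adj' R u v := by
  have h1 : mE R t u v ≤ ∑ s : EIdx h, mE R s u v :=
    Finset.single_le_sum (f := fun s => mE R s u v) (fun s _ => Nat.zero_le _)
      (Finset.mem_univ t)
  exact Nat.lt_of_lt_of_le ht (le_trans h1 (Nat.le_add_left _ _))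

lemma adj'_of_zip {p : Hv h} {d : Fin 3} {u v : V}
    (hm : (u, v) ∈ (pf R p d).zip (pf R p d).tail) : Adj' R u v :=
  adj'_of_mW R (by
    have : 0 < ((pf R p d).zip (pf R p d).tail).count (u, v) := List.count_pos_iff.2 hm
    calc 0 < _ := this
    _ ≤ mW R p u v :=
      Finset.single_le_sum (f := fun e => ((pf R p e).zip (pf R p e).tail).count (u, v))
        (fun e _ => Nat.zero_le _) (Finset.mem_univ d))

lemma adj'_of_eA {t : EIdx h} {u v : V} (he : R.eA (sym t) u v) : Adj' R u v :=
  adj'_of_mE R (lt_of_lt_of_le zero_lt_one ((mE_spec R t).1 u v he))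

lemma pf_chain' (p : Hv h) (d : Fin 3) : (pf R p d).Chain' (Adj' R) :=
  chain'_of_forall_zip_tail (fun _ _ hm => adj'_of_zip R hm)

lemma pf_dipathIn (p : Hv h) (d : Fin 3) : DipathIn (Adj' R) (wset R p) (pf R p d) :=
  ⟨⟨(pf_spec R p d).1.1.1, (pf_spec R p d).1.1.2.1, pf_chain' R p d⟩, fun v hv => ⟨d, hv⟩⟩

lemma eS_strong (t : EIdx h) : StrongOn (Adj' R) (R.eS (sym t)) :=
  strongOn_mono_adj (fun _ _ he => adj'_of_eA R he) (R.eEul (sym t) (sym_mem t)).1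

lemma wset_strong (p : Hv h) : StrongOn (Adj' R) (wset R p) := by
  have key : ∀ d : Fin 3, ∀ u ∈ pf R p d,
      Reach (Adj' R) (wset R p) (term R p d) u ∧
        Reach (Adj' R) (wset R p) u (term R p (d + 1)) := by
    intro d u hu
    exact reach_of_dipathIn_mem (pf_dipathIn R p d) hu (pf_spec R p d).2.1 (pf_spec R p d).2.2
  have step : ∀ d : Fin 3, Reach (Adj' R) (wset R p) (term R p d) (term R p (d + 1)) := by
    intro d
    exact (key d (term R p (d + 1))
      (List.mem_of_mem_getLast? (by rw [(pf_spec R p d).2.2]; rfl))).1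
  have cyc : ∀ d d' : Fin 3, Reach (Adj' R) (wset R p) (term R p d) (term R p d') := by
    intro d d'
    have h0 : ∀ d : Fin 3, Reach (Adj' R) (wset R p) (term R p d) (term R p d) :=
      fun d => reach_refl (term_mem_wset R p d)
    have hcase : d' = d ∨ d' = d + 1 ∨ d' = d + 1 + 1 := by
      rcases fin3 d with rfl | rfl | rfl <;> rcases fin3 d' with rfl | rfl | rfl <;> decide
    rcases hcase with hq | hq | hq <;> rw [hq]
    · exact h0 d
    · exact step d
    · exact (step d).trans (step (d + 1))
  rintro u ⟨d, hd⟩ v ⟨d', hd'⟩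
  exact ((key d u hd).2.trans ((cyc (d + 1) d').trans (key d' v hd').1) : _)

end Construction
end S7

namespace S7
section Construction2
variable {h : ℕ} {V : Type} [Fintype V] [DecidableEq V] {A : V → V → Prop}
variable (R : DigraphRep V A (⊤ : SimpleGraph (Fin (kk h))))

def blockR (i j : ZMod (nn h)) : Set V :=
  wset R (i, j, false) ∪ R.eS (sym ((2 : Fin 3), i, j)) ∪ R.eS (sym ((0 : Fin 3), i, j))

def blockC (j i : ZMod (nn h)) : Set V :=
  wset R (i, j, true) ∪ R.eS (sym ((1 : Fin 3), i, j))

def RowPlus (i : ZMod (nn h)) : Set V := ⋃ j, blockR R i j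
def Col (j : ZMod (nn h)) : Set V := ⋃ i, blockC R j i

lemma term_f0_mem (i j : ZMod (nn h)) :
    term R (i, j, false) 0 ∈ wset R (i, j, false) ∩ R.eS (sym ((0 : Fin 3), i, j)) := by
  refine ⟨term_mem_wset R _ _, ?_⟩
  have := term_mem_eS R (i, j, false) 0
  rwa [eI_f0] at this

lemma term_f1_mem (i j : ZMod (nn h)) :
    term R (i, j + 1, false) 1 ∈ wset R (i, j + 1, false) ∩ R.eS (sym ((0 : Fin 3), i, j)) := by
  refine ⟨term_mem_wset R _ _, ?_⟩
  have := term_mem_eS R (i, j + 1, false) 1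
  rwa [eI_f1, add_sub_cancel_right] at this

lemma term_f2_mem (i j : ZMod (nn h)) :
    term R (i, j, false) 2 ∈ wset R (i, j, false) ∩ R.eS (sym ((2 : Fin 3), i, j)) := by
  refine ⟨term_mem_wset R _ _, ?_⟩
  have := term_mem_eS R (i, j, false) 2
  rwa [eI_f2] at this

lemma term_t0_mem (i j : ZMod (nn h)) :
    term R (i, j, true) 0 ∈ wset R (i, j, true) ∩ R.eS (sym ((1 : Fin 3), i, j)) := by
  refine ⟨term_mem_wset R _ _, ?_⟩
  have := term_mem_eS R (i, j, true) 0
  rwa [eI_t0] at this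

lemma term_t1_mem (i j : ZMod (nn h)) :
    term R (i + 1, j, true) 1 ∈ wset R (i + 1, j, true) ∩ R.eS (sym ((1 : Fin 3), i, j)) := by
  refine ⟨term_mem_wset R _ _, ?_⟩
  have := term_mem_eS R (i + 1, j, true) 1
  rwa [eI_t1, add_sub_cancel_right] at this

lemma term_t2_mem (i j : ZMod (nn h)) :
    term R (i, j, true) 2 ∈ wset R (i, j, true) ∩ R.eS (sym ((2 : Fin 3), i, j)) := by
  refine ⟨term_mem_wset R _ _, ?_⟩
  have := term_mem_eS R (i, j, true) 2
  rwa [eI_t2] at this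

lemma blockR_strong (i j : ZMod (nn h)) : StrongOn (Adj' R) (blockR R i j) := by
  refine pairGlue (pairGlue (wset_strong R _) (eS_strong R _) ?_) (eS_strong R _) ?_
  · exact ⟨term R (i, j, false) 2, term_f2_mem R i j⟩
  · exact ⟨term R (i, j, false) 0, Set.mem_inter
      (Set.mem_union_left _ (term_f0_mem R i j).1) (term_f0_mem R i j).2⟩

lemma blockC_strong (j i : ZMod (nn h)) : StrongOn (Adj' R) (blockC R j i) :=
  pairGlue (wset_strong R _) (eS_strong R _) ⟨term R (i, j, true) 0, term_t0_mem R i j⟩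

def PartR (i : ZMod (nn h)) : ℕ → Set V
  | 0 => blockR R i 0
  | k + 1 => PartR i k ∪ blockR R i ((k + 1 : ℕ) : ZMod (nn h))

def PartC (j : ZMod (nn h)) : ℕ → Set V
  | 0 => blockC R j 0
  | k + 1 => PartC j k ∪ blockC R j ((k + 1 : ℕ) : ZMod (nn h))

lemma blockR_subset_partR (i : ZMod (nn h)) :
    ∀ k l : ℕ, l ≤ k → blockR R i (l : ZMod (nn h)) ⊆ PartR R i k := by
  intro k
  induction k with
  | zero => intro l hl; interval_cases l; simp [PartR]
  | succ k ih =>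
    intro l hl
    rcases Nat.lt_or_ge l (k + 1) with hlt | hge
    · exact (ih l (by omega)).trans Set.subset_union_left
    · have : l = k + 1 := by omega
      subst this
      exact Set.subset_union_right

lemma blockC_subset_partC (j : ZMod (nn h)) :
    ∀ k l : ℕ, l ≤ k → blockC R j (l : ZMod (nn h)) ⊆ PartC R j k := by
  intro k
  induction k with
  | zero => intro l hl; interval_cases l; simp [PartC]
  | succ k ih =>
    intro l hl
    rcases Nat.lt_or_ge l (k + 1) with hlt | hge
    · exact (ih l (by omega)).trans Set.subset_union_left
    · have : l = k + 1 := by omega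
      subst this
      exact Set.subset_union_right

lemma partR_strong (i : ZMod (nn h)) : ∀ k : ℕ, StrongOn (Adj' R) (PartR R i k) := by
  intro k
  induction k with
  | zero => exact blockR_strong R i 0
  | succ k ih =>
    refine pairGlue ih (blockR_strong R i _) ?_
    refine ⟨term R (i, ((k + 1 : ℕ) : ZMod (nn h)), false) 1, ?_, ?_⟩
    · have hmem := (term_f1_mem R i ((k : ℕ) : ZMod (nn h))).2
      rw [show ((k : ℕ) : ZMod (nn h)) + 1 = ((k + 1 : ℕ) : ZMod (nn h)) by push_cast; ring]
        at hmem
      exact blockR_subset_partR R i k k le_rfl (Set.mem_union_right _ hmem)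
    · have hmem := (term_f1_mem R i ((k : ℕ) : ZMod (nn h))).1
      rw [show ((k : ℕ) : ZMod (nn h)) + 1 = ((k + 1 : ℕ) : ZMod (nn h)) by push_cast; ring]
        at hmem
      exact Set.mem_union_left _ (Set.mem_union_left _ hmem)

lemma partC_strong (j : ZMod (nn h)) : ∀ k : ℕ, StrongOn (Adj' R) (PartC R j k) := by
  intro k
  induction k with
  | zero => exact blockC_strong R j 0
  | succ k ih =>
    refine pairGlue ih (blockC_strong R j _) ?_
    refine ⟨term R (((k + 1 : ℕ) : ZMod (nn h)), j, true) 1, ?_, ?_⟩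
    · have hmem := (term_t1_mem R ((k : ℕ) : ZMod (nn h)) j).2
      rw [show ((k : ℕ) : ZMod (nn h)) + 1 = ((k + 1 : ℕ) : ZMod (nn h)) by push_cast; ring]
        at hmem
      exact blockC_subset_partC R j k k le_rfl (Set.mem_union_right _ hmem)
    · have hmem := (term_t1_mem R ((k : ℕ) : ZMod (nn h)) j).1
      rw [show ((k : ℕ) : ZMod (nn h)) + 1 = ((k + 1 : ℕ) : ZMod (nn h)) by push_cast; ring]
        at hmem
      exact Set.mem_union_left _ hmem

lemma partR_subset_rowPlus (i : ZMod (nn h)) :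
    ∀ k : ℕ, PartR R i k ⊆ RowPlus R i := by
  intro k
  induction k with
  | zero => exact fun v hv => Set.mem_iUnion.2 ⟨0, hv⟩
  | succ k ih =>
    rintro v (hv | hv)
    · exact ih hv
    · exact Set.mem_iUnion.2 ⟨_, hv⟩

lemma partC_subset_col (j : ZMod (nn h)) :
    ∀ k : ℕ, PartC R j k ⊆ Col R j := by
  intro k
  induction k with
  | zero => exact fun v hv => Set.mem_iUnion.2 ⟨0, hv⟩
  | succ k ih =>
    rintro v (hv | hv)
    · exact ih hv
    · exact Set.mem_iUnion.2 ⟨_, hv⟩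

lemma rowPlus_eq_partR (i : ZMod (nn h)) : RowPlus R i = PartR R i (nn h - 1) := by
  apply Set.Subset.antisymm
  · intro v hv
    rw [RowPlus, Set.mem_iUnion] at hv
    obtain ⟨j, hj⟩ := hv
    have hj2 : ((j.val : ℕ) : ZMod (nn h)) = j := ZMod.natCast_rightInverse j
    refine blockR_subset_partR R i (nn h - 1) j.val ?_ (by rw [hj2]; exact hj)
    have := ZMod.val_lt j
    omega
  · exact partR_subset_rowPlus R i _

lemma col_eq_partC (j : ZMod (nn h)) : Col R j = PartC R j (nn h - 1) := by
  apply Set.Subset.antisymm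
  · intro v hv
    rw [Col, Set.mem_iUnion] at hv
    obtain ⟨i, hi⟩ := hv
    have hi2 : ((i.val : ℕ) : ZMod (nn h)) = i := ZMod.natCast_rightInverse i
    refine blockC_subset_partC R j (nn h - 1) i.val ?_ (by rw [hi2]; exact hi)
    have := ZMod.val_lt i
    omega
  · exact partC_subset_col R j _

lemma rowPlus_strong (i : ZMod (nn h)) : StrongOn (Adj' R) (RowPlus R i) := by
  rw [rowPlus_eq_partR]
  exact partR_strong R i _

lemma col_strong (j : ZMod (nn h)) : StrongOn (Adj' R) (Col R j) := by
  rw [col_eq_partC]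
  exact partC_strong R j _

lemma cross_mem (i j : ZMod (nn h)) :
    term R (i, j, true) 2 ∈ RowPlus R i ∩ Col R j := by
  constructor
  · rw [RowPlus, Set.mem_iUnion]
    exact ⟨j, Set.mem_union_left _ (Set.mem_union_right _ (term_t2_mem R i j).2)⟩
  · rw [Col, Set.mem_iUnion]
    exact ⟨i, Set.mem_union_left _ (term_t2_mem R i j).1⟩

def UU (Z : Finset V) : Set V :=
  (⋃ i, ⋃ (_ : RowPlus R i ∩ ↑Z = ∅), RowPlus R i) ∪
    (⋃ j, ⋃ (_ : Col R j ∩ ↑Z = ∅), Col R j)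

lemma UU_strong (Z : Finset V) (hrow : ∃ i, RowPlus R i ∩ ↑Z = ∅)
    (hcol : ∃ j, Col R j ∩ ↑Z = ∅) : StrongOn (Adj' R) (UU R Z) := by
  obtain ⟨i₀, hi₀⟩ := hrow
  obtain ⟨j₀, hj₀⟩ := hcol
  set b := term R (i₀, j₀, true) 2 with hb
  have hbr : b ∈ RowPlus R i₀ := (cross_mem R i₀ j₀).1
  have hbc : b ∈ Col R j₀ := (cross_mem R i₀ j₀).2
  have hrsub : ∀ i, RowPlus R i ∩ ↑Z = ∅ → RowPlus R i ⊆ UU R Z := by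
    intro i hi
    refine Set.subset_union_left.trans' ?_
    intro v hv
    exact Set.mem_iUnion.2 ⟨i, Set.mem_iUnion.2 ⟨hi, hv⟩⟩
  have hcsub : ∀ j, Col R j ∩ ↑Z = ∅ → Col R j ⊆ UU R Z := by
    intro j hj
    refine Set.subset_union_right.trans' ?_
    intro v hv
    exact Set.mem_iUnion.2 ⟨j, Set.mem_iUnion.2 ⟨hj, hv⟩⟩
  have key : ∀ u ∈ UU R Z, Reach (Adj' R) (UU R Z) u b ∧ Reach (Adj' R) (UU R Z) b u := by
    intro u hu
    rcases hu with hu | hu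
    · rw [Set.mem_iUnion] at hu
      obtain ⟨i, hi⟩ := hu
      rw [Set.mem_iUnion] at hi
      obtain ⟨hfree, hu⟩ := hi
      set c := term R (i, j₀, true) 2 with hc
      have hcr : c ∈ RowPlus R i := (cross_mem R i j₀).1
      have hcc : c ∈ Col R j₀ := (cross_mem R i j₀).2
      constructor
      · exact (reach_mono_set (hrsub i hfree) (rowPlus_strong R i u hu c hcr)).trans
          (reach_mono_set (hcsub j₀ hj₀) (col_strong R j₀ c hcc b hbc))
      · exact (reach_mono_set (hcsub j₀ hj₀) (col_strong R j₀ b hbc c hcc)).trans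
          (reach_mono_set (hrsub i hfree) (rowPlus_strong R i c hcr u hu))
    · rw [Set.mem_iUnion] at hu
      obtain ⟨j, hj⟩ := hu
      rw [Set.mem_iUnion] at hj
      obtain ⟨hfree, hu⟩ := hj
      set c := term R (i₀, j, true) 2 with hc
      have hcr : c ∈ RowPlus R i₀ := (cross_mem R i₀ j).1
      have hcc : c ∈ Col R j := (cross_mem R i₀ j).2
      constructor
      · exact (reach_mono_set (hcsub j hfree) (col_strong R j u hu c hcc)).trans
          (reach_mono_set (hrsub i₀ hi₀) (rowPlus_strong R i₀ c hcr b hbr))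
      · exact (reach_mono_set (hrsub i₀ hi₀) (rowPlus_strong R i₀ b hbr c hcr)).trans
          (reach_mono_set (hcsub j hfree) (col_strong R j c hcc u hu))
  intro u hu v hv
  exact ((key u hu).1).trans ((key v hv).2)

lemma rowPlus_subset_SS (i : ZMod (nn h)) : RowPlus R i ⊆ SS R := by
  intro v hv
  rw [RowPlus, Set.mem_iUnion] at hv
  obtain ⟨j, hj⟩ := hv
  rcases hj with (hj | hj) | hj
  · exact Or.inl ⟨_, hj⟩
  · exact Or.inr ⟨_, hj⟩
  · exact Or.inr ⟨_, hj⟩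

lemma col_subset_SS (j : ZMod (nn h)) : Col R j ⊆ SS R := by
  intro v hv
  rw [Col, Set.mem_iUnion] at hv
  obtain ⟨i, hi⟩ := hv
  rcases hi with hi | hi
  · exact Or.inl ⟨_, hi⟩
  · exact Or.inr ⟨_, hi⟩

lemma UU_subset_SS (Z : Finset V) : UU R Z ⊆ SS R := by
  rintro v (hv | hv)
  · rw [Set.mem_iUnion] at hv
    obtain ⟨i, hi⟩ := hv
    rw [Set.mem_iUnion] at hi
    exact rowPlus_subset_SS R i hi.2
  · rw [Set.mem_iUnion] at hv
    obtain ⟨j, hj⟩ := hv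
    rw [Set.mem_iUnion] at hj
    exact col_subset_SS R j hj.2

lemma SS_eq_UU_empty : SS R = UU R (∅ : Finset V) := by
  apply Set.Subset.antisymm
  · rintro v (⟨p, hp⟩ | ⟨t, ht⟩)
    · obtain ⟨i, j, b⟩ := p
      cases b
      · refine Set.mem_union_left _ (Set.mem_iUnion.2 ⟨i, Set.mem_iUnion.2 ⟨by simp, ?_⟩⟩)
        rw [RowPlus, Set.mem_iUnion]
        exact ⟨j, Set.mem_union_left _ (Set.mem_union_left _ hp)⟩
      · refine Set.mem_union_right _ (Set.mem_iUnion.2 ⟨j, Set.mem_iUnion.2 ⟨by simp, ?_⟩⟩)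
        rw [Col, Set.mem_iUnion]
        exact ⟨i, Set.mem_union_left _ hp⟩
    · obtain ⟨c, i, j⟩ := t
      rcases fin3 c with rfl | rfl | rfl
      · refine Set.mem_union_left _ (Set.mem_iUnion.2 ⟨i, Set.mem_iUnion.2 ⟨by simp, ?_⟩⟩)
        rw [RowPlus, Set.mem_iUnion]
        exact ⟨j, Set.mem_union_right _ ht⟩
      · refine Set.mem_union_right _ (Set.mem_iUnion.2 ⟨j, Set.mem_iUnion.2 ⟨by simp, ?_⟩⟩)
        rw [Col, Set.mem_iUnion]
        exact ⟨i, Set.mem_union_right _ ht⟩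
      · refine Set.mem_union_left _ (Set.mem_iUnion.2 ⟨i, Set.mem_iUnion.2 ⟨by simp, ?_⟩⟩)
        rw [RowPlus, Set.mem_iUnion]
        exact ⟨j, Set.mem_union_left _ (Set.mem_union_right _ ht)⟩
  · exact UU_subset_SS R ∅

lemma UU_disj (Z : Finset V) : UU R Z ∩ ↑Z = ∅ := by
  ext v
  simp only [Set.mem_inter_iff, Set.mem_empty_iff_false, iff_false, not_and]
  rintro (hv | hv) hvZ
  · rw [Set.mem_iUnion] at hv
    obtain ⟨i, hi⟩ := hv
    rw [Set.mem_iUnion] at hi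
    obtain ⟨hfree, hv⟩ := hi
    exact absurd (Set.mem_inter hv hvZ) (by rw [hfree]; exact fun hc => hc)
  · rw [Set.mem_iUnion] at hv
    obtain ⟨j, hj⟩ := hv
    rw [Set.mem_iUnion] at hj
    obtain ⟨hfree, hv⟩ := hj
    exact absurd (Set.mem_inter hv hvZ) (by rw [hfree]; exact fun hc => hc)

lemma UU_anti {Z Z' : Finset V} (hZZ : Z' ⊆ Z) : UU R Z ⊆ UU R Z' := by
  rintro v (hv | hv)
  · rw [Set.mem_iUnion] at hv
    obtain ⟨i, hi⟩ := hv
    rw [Set.mem_iUnion] at hi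
    obtain ⟨hfree, hv⟩ := hi
    refine Set.mem_union_left _ (Set.mem_iUnion.2 ⟨i, Set.mem_iUnion.2 ⟨?_, hv⟩⟩)
    rw [Set.eq_empty_iff_forall_notMem] at hfree ⊢
    exact fun x hx => hfree x ⟨hx.1, Finset.coe_subset.2 hZZ hx.2⟩
  · rw [Set.mem_iUnion] at hv
    obtain ⟨j, hj⟩ := hv
    rw [Set.mem_iUnion] at hj
    obtain ⟨hfree, hv⟩ := hj
    refine Set.mem_union_right _ (Set.mem_iUnion.2 ⟨j, Set.mem_iUnion.2 ⟨?_, hv⟩⟩)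
    rw [Set.eq_empty_iff_forall_notMem] at hfree ⊢
    exact fun x hx => hfree x ⟨hx.1, Finset.coe_subset.2 hZZ hx.2⟩

lemma UU_nonempty (Z : Finset V) (hrow : ∃ i, RowPlus R i ∩ ↑Z = ∅) :
    (UU R Z).Nonempty := by
  obtain ⟨i, hi⟩ := hrow
  refine ⟨term R (i, 0, true) 2, Set.mem_union_left _
    (Set.mem_iUnion.2 ⟨i, Set.mem_iUnion.2 ⟨hi, (cross_mem R i 0).1⟩⟩)⟩

end Construction2
end S7

namespace S7
section Construction3
variable {h : ℕ} {V : Type} [Fintype V] [DecidableEq V] {A : V → V → Prop}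
variable (R : DigraphRep V A (⊤ : SimpleGraph (Fin (kk h))))

lemma sum_mW_right (p : Hv h) (v : V) :
    ∑ u, mW R p v u = ∑ d : Fin 3, (pf R p d).dropLast.count v := by
  unfold mW
  rw [Finset.sum_comm]
  refine Finset.sum_congr rfl fun d _ => ?_
  rw [sum_count_fst, zip_tail_map_fst]

lemma sum_mW_left (p : Hv h) (v : V) :
    ∑ u, mW R p u v = ∑ d : Fin 3, (pf R p d).tail.count v := by
  unfold mW
  rw [Finset.sum_comm]
  refine Finset.sum_congr rfl fun d _ => ?_
  rw [sum_count_snd, zip_tail_map_snd]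

lemma count_eq_tail_add (l : List V) (x v : V) (hh : l.head? = some x) :
    l.count v = l.tail.count v + if v = x then 1 else 0 := by
  obtain ⟨t, rfl⟩ : ∃ t, l = x :: t := by
    cases l with
    | nil => simp at hh
    | cons a t => cases hh; exact ⟨t, rfl⟩
  simp only [List.tail_cons, List.count_cons]
  rcases eq_or_ne v x with rfl | hvx
  · simp
  · simp [hvx, hvx.symm]

lemma count_eq_dropLast_add (l : List V) (y v : V) (hg : l.getLast? = some y) :
    l.count v = l.dropLast.count v + if v = y then 1 else 0 := by
  have hne : l ≠ [] := by rintro rfl; simp at hg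
  have hy : l.getLast hne = y := by
    rw [List.getLast?_eq_getLast hne] at hg; exact Option.some.inj hg
  conv_lhs => rw [← List.dropLast_append_getLast hne]
  rw [List.count_append, hy]
  simp only [List.count_cons, List.count_nil]
  rcases eq_or_ne v y with rfl | hvy
  · simp
  · simp [hvy, hvy.symm]

lemma pf_count_le_one (p : Hv h) (d : Fin 3) (v : V) : (pf R p d).count v ≤ 1 :=
  List.nodup_iff_count_le_one.1 (pf_spec R p d).1.1.2.1 v

lemma mW_in_eq_out (p : Hv h) (v : V) : ∑ u, mW R p u v = ∑ u, mW R p v u := by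
  rw [sum_mW_left, sum_mW_right]
  have htail : ∀ d : Fin 3,
      (pf R p d).count v = (pf R p d).tail.count v + if v = term R p d then 1 else 0 :=
    fun d => count_eq_tail_add _ _ _ (pf_spec R p d).2.1
  have hdrop : ∀ d : Fin 3,
      (pf R p d).count v = (pf R p d).dropLast.count v +
        if v = term R p (d + 1) then 1 else 0 :=
    fun d => count_eq_dropLast_add _ _ _ (pf_spec R p d).2.2
  have h0 := htail 0; have h1 := htail 1; have h2 := htail 2
  have g0 := hdrop 0; have g1 := hdrop 1; have g2 := hdrop 2
  rw [show (0 : Fin 3) + 1 = 1 by decide] at g0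
  rw [show (1 : Fin 3) + 1 = 2 by decide] at g1
  rw [show (2 : Fin 3) + 1 = 0 by decide] at g2
  rw [Fin.sum_univ_three, Fin.sum_univ_three]
  omega

lemma sum_mW_right_le (p : Hv h) (v : V) : ∑ u, mW R p v u ≤ 3 := by
  rw [sum_mW_right]
  calc ∑ d : Fin 3, (pf R p d).dropLast.count v
      ≤ ∑ _d : Fin 3, 1 := Finset.sum_le_sum fun d _ =>
        le_trans ((pf R p d).dropLast_sublist.count_le v) (pf_count_le_one R p d v)
    _ = 3 := by simp

lemma sum_mW_right_eq_zero (p : Hv h) (v : V) (hv : v ∉ R.vS (ι h p)) :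
    ∑ u, mW R p v u = 0 := by
  rw [sum_mW_right]
  refine Finset.sum_eq_zero fun d _ => List.count_eq_zero.2 fun hc => ?_
  exact hv ((pf_spec R p d).1.2 v ((pf R p d).dropLast_subset hc))

lemma mE_eq_zero_of_not_mem_left (t : EIdx h) (v u : V) (hv : v ∉ R.eS (sym t)) :
    mE R t v u = 0 := by
  refine (mE_spec R t).2.1 v u fun he => ?_
  exact hv (R.eSub (sym t) (sym_mem t) v u he).2.1

lemma mE_eq_zero_of_not_mem_right (t : EIdx h) (u v : V) (hv : v ∉ R.eS (sym t)) :
    mE R t u v = 0 := by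
  refine (mE_spec R t).2.1 u v fun he => ?_
  exact hv (R.eSub (sym t) (sym_mem t) u v he).2.2

lemma sum_mE_in_eq_out (t : EIdx h) (v : V) : ∑ u, mE R t u v = ∑ u, mE R t v u := by
  by_cases hv : v ∈ R.eS (sym t)
  · exact ((mE_spec R t).2.2 v hv).1
  · rw [Finset.sum_eq_zero fun u _ => mE_eq_zero_of_not_mem_right R t u v hv,
      Finset.sum_eq_zero fun u _ => mE_eq_zero_of_not_mem_left R t v u hv]

lemma sum_mE_out_le (t : EIdx h) (v : V) : ∑ u, mE R t v u ≤ 2 := by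
  by_cases hv : v ∈ R.eS (sym t)
  · exact ((mE_spec R t).2.2 v hv).2
  · rw [Finset.sum_eq_zero fun u _ => mE_eq_zero_of_not_mem_left R t v u hv]
    omega

lemma mT_in_eq_out (v : V) : ∑ u, mT R u v = ∑ u, mT R v u := by
  unfold mT
  rw [Finset.sum_add_distrib, Finset.sum_add_distrib,
    show (∑ u : V, ∑ p : Hv h, mW R p u v) = ∑ p : Hv h, ∑ u : V, mW R p u v
      from Finset.sum_comm,
    show (∑ u : V, ∑ t : EIdx h, mE R t u v) = ∑ t : EIdx h, ∑ u : V, mE R t u v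
      from Finset.sum_comm,
    show (∑ u : V, ∑ p : Hv h, mW R p v u) = ∑ p : Hv h, ∑ u : V, mW R p v u
      from Finset.sum_comm,
    show (∑ u : V, ∑ t : EIdx h, mE R t v u) = ∑ t : EIdx h, ∑ u : V, mE R t v u
      from Finset.sum_comm]
  congr 1
  · exact Finset.sum_congr rfl fun p _ => mW_in_eq_out R p v
  · exact Finset.sum_congr rfl fun t _ => sum_mE_in_eq_out R t v

lemma mT_out_le (v : V) : ∑ u, mT R v u ≤ 5 := by
  unfold mT
  rw [Finset.sum_add_distrib,
    show (∑ u : V, ∑ p : Hv h, mW R p v u) = ∑ p : Hv h, ∑ u : V, mW R p v u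
      from Finset.sum_comm,
    show (∑ u : V, ∑ t : EIdx h, mE R t v u) = ∑ t : EIdx h, ∑ u : V, mE R t v u
      from Finset.sum_comm]
  have h1 : ∑ p : Hv h, ∑ u, mW R p v u ≤ 3 := by
    refine sum_le_of_unique ?_ (fun p => sum_mW_right_le R p v)
    intro p q hp hq
    by_contra hpq
    have hvp : v ∈ R.vS (ι h p) := by
      by_contra hc; exact hp (sum_mW_right_eq_zero R p v hc)
    have hvq : v ∈ R.vS (ι h q) := by
      by_contra hc; exact hq (sum_mW_right_eq_zero R q v hc)
    exact Set.disjoint_left.1 (R.vDisj (ι h p) (ι h q)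
      (fun hc => hpq ((ι h).injective hc))) hvp hvq
  have h2 : ∑ t : EIdx h, ∑ u, mE R t v u ≤ 2 := by
    refine sum_le_of_unique ?_ (fun t => sum_mE_out_le R t v)
    intro t s ht hs
    by_contra hts
    have hvt : v ∈ R.eS (sym t) := by
      by_contra hc
      exact ht (Finset.sum_eq_zero fun u _ => mE_eq_zero_of_not_mem_left R t v u hc)
    have hvs : v ∈ R.eS (sym s) := by
      by_contra hc
      exact hs (Finset.sum_eq_zero fun u _ => mE_eq_zero_of_not_mem_left R s v u hc)
    exact Set.disjoint_left.1 (R.eDisj (sym t) (sym_mem t) (sym s) (sym_mem s)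
      (fun hc => hts (sym_inj hc))) hvt hvs
  omega

lemma adj'_subdigraph : IsSubdigraph A (SS R) (Adj' R) := by
  intro u v huv
  rw [Adj'] at huv
  have : (0 < ∑ p : Hv h, mW R p u v) ∨ 0 < ∑ t : EIdx h, mE R t u v := by
    rw [mT] at huv; omega
  rcases this with hp | ht
  · obtain ⟨p, -, hp⟩ := Finset.exists_lt_of_sum_lt (by simpa using hp :
      ∑ _q : Hv h, (0:ℕ) < ∑ q : Hv h, mW R q u v)
    have : ∃ d : Fin 3, 0 < ((pf R p d).zip (pf R p d).tail).count (u, v) := by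
      by_contra hc
      push_neg at hc
      simp only [Nat.le_zero] at hc
      rw [show mW R p u v = ∑ d : Fin 3, ((pf R p d).zip (pf R p d).tail).count (u, v)
        from rfl, Finset.sum_eq_zero (fun d _ => hc d)] at hp
      omega
    obtain ⟨d, hd⟩ := this
    have hmem := List.count_pos_iff.1 hd
    have hva := adj_of_mem_zip_tail (pf_spec R p d).1.1.2.2 hmem
    have hA := (R.vSub (ι h p) u v hva).1
    obtain ⟨hu, hv⟩ := mem_of_mem_zip_tail hmem
    exact ⟨hA, Or.inl ⟨p, d, hu⟩, Or.inl ⟨p, d, hv⟩⟩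
  · obtain ⟨t, -, ht⟩ := Finset.exists_lt_of_sum_lt (by simpa using ht :
      ∑ _s : EIdx h, (0:ℕ) < ∑ s : EIdx h, mE R s u v)
    have hea : R.eA (sym t) u v := by
      by_contra hc
      rw [(mE_spec R t).2.1 u v hc] at ht
      omega
    obtain ⟨hA, hu, hv⟩ := R.eSub (sym t) (sym_mem t) u v hea
    exact ⟨hA, Or.inr ⟨t, hu⟩, Or.inr ⟨t, hv⟩⟩

end Construction3
end S7

namespace S7
section Construction4
variable {h : ℕ} {V : Type} [Fintype V] [DecidableEq V] {A : V → V → Prop}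
variable (R : DigraphRep V A (⊤ : SimpleGraph (Fin (kk h))))

lemma free_rows_exist (Z : Finset V) (hZ : Z.card ≤ h) :
    ∃ i, RowPlus R i ∩ ↑Z = ∅ := by
  classical
  by_contra hc
  push_neg at hc
  have hne : ∀ i, (RowPlus R i ∩ ↑Z).Nonempty := hc
  set f : ZMod (nn h) → {x // x ∈ Z} × Bool := fun i =>
    (⟨(hne i).some, (hne i).some_mem.2⟩,
      if ∃ j, (hne i).some ∈ wset R (i, j, false) then true else false) with hf
  have hinj : Function.Injective f := by
    intro i i' hii
    rw [hf, Prod.ext_iff, Subtype.ext_iff] at hii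
    obtain ⟨hz, htag⟩ := hii
    simp only at hz htag
    by_cases hw : ∃ j, (hne i).some ∈ wset R (i, j, false)
    · have hw' : ∃ j', (hne i').some ∈ wset R (i', j', false) := by
        by_contra hcc
        rw [if_pos hw, if_neg hcc] at htag
        exact Bool.noConfusion htag
      obtain ⟨j, hj⟩ := hw
      obtain ⟨j', hj'⟩ := hw'
      rw [← hz] at hj'
      by_contra hii'
      have hvd := R.vDisj (ι h (i, j, false)) (ι h (i', j', false))
        (fun hceq => hii' (congrArg (fun q : Hv h => q.1) ((ι h).injective hceq)))
      exact Set.disjoint_left.1 hvd (wset_sub_vS R _ hj) (wset_sub_vS R _ hj')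
    · have hw' : ¬ ∃ j', (hne i').some ∈ wset R (i', j', false) := by
        intro hcc
        rw [if_neg hw, if_pos hcc] at htag
        exact Bool.noConfusion htag
      have hER : ∀ (i₀ : ZMod (nn h)), (¬ ∃ j, (hne i₀).some ∈ wset R (i₀, j, false)) →
          ∃ t : EIdx h, (hne i₀).some ∈ R.eS (sym t) ∧ t.2.1 = i₀ ∧ (t.1 = 2 ∨ t.1 = 0) := by
        intro i₀ hnw
        have hmem : (hne i₀).some ∈ ⋃ j, blockR R i₀ j := (hne i₀).some_mem.1
        obtain ⟨j, hj⟩ := Set.mem_iUnion.1 hmem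
        rcases hj with (hj | hj) | hj
        · exact absurd ⟨j, hj⟩ hnw
        · exact ⟨((2 : Fin 3), i₀, j), hj, rfl, Or.inl rfl⟩
        · exact ⟨((0 : Fin 3), i₀, j), hj, rfl, Or.inr rfl⟩
      obtain ⟨t, ht, hti, -⟩ := hER i hw
      obtain ⟨t', ht', hti', -⟩ := hER i' hw'
      rw [← hz] at ht'
      by_contra hii'
      have hed := R.eDisj (sym t) (sym_mem t) (sym t') (sym_mem t')
        (fun hceq => hii' (by rw [← hti, ← hti', sym_inj hceq]))
      exact Set.disjoint_left.1 hed ht ht'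
  have hcard := Fintype.card_le_of_injective f hinj
  rw [ZMod.card] at hcard
  rw [Fintype.card_prod, Fintype.card_coe, Fintype.card_bool] at hcard
  have : nn h = 2 * h + 4 := rfl
  omega

lemma free_cols_exist (Z : Finset V) (hZ : Z.card ≤ h) :
    ∃ j, Col R j ∩ ↑Z = ∅ := by
  classical
  by_contra hc
  push_neg at hc
  have hne : ∀ j, (Col R j ∩ ↑Z).Nonempty := hc
  set f : ZMod (nn h) → {x // x ∈ Z} × Bool := fun j =>
    (⟨(hne j).some, (hne j).some_mem.2⟩,
      if ∃ i, (hne j).some ∈ wset R (i, j, true) then true else false) with hf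
  have hinj : Function.Injective f := by
    intro j j' hjj
    rw [hf, Prod.ext_iff, Subtype.ext_iff] at hjj
    obtain ⟨hz, htag⟩ := hjj
    simp only at hz htag
    by_cases hw : ∃ i, (hne j).some ∈ wset R (i, j, true)
    · have hw' : ∃ i', (hne j').some ∈ wset R (i', j', true) := by
        by_contra hcc
        rw [if_pos hw, if_neg hcc] at htag
        exact Bool.noConfusion htag
      obtain ⟨i, hi⟩ := hw
      obtain ⟨i', hi'⟩ := hw'
      rw [← hz] at hi'
      by_contra hjj'
      have hvd := R.vDisj (ι h (i, j, true)) (ι h (i', j', true))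
        (fun hceq => hjj' (congrArg (fun q : Hv h => q.2.1) ((ι h).injective hceq)))
      exact Set.disjoint_left.1 hvd (wset_sub_vS R _ hi) (wset_sub_vS R _ hi')
    · have hw' : ¬ ∃ i', (hne j').some ∈ wset R (i', j', true) := by
        intro hcc
        rw [if_neg hw, if_pos hcc] at htag
        exact Bool.noConfusion htag
      have hER : ∀ (j₀ : ZMod (nn h)), (¬ ∃ i, (hne j₀).some ∈ wset R (i, j₀, true)) →
          ∃ t : EIdx h, (hne j₀).some ∈ R.eS (sym t) ∧ t.2.2 = j₀ ∧ t.1 = 1 := by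
        intro j₀ hnw
        have hmem : (hne j₀).some ∈ ⋃ i, blockC R j₀ i := (hne j₀).some_mem.1
        obtain ⟨i, hi⟩ := Set.mem_iUnion.1 hmem
        rcases hi with hi | hi
        · exact absurd ⟨i, hi⟩ hnw
        · exact ⟨((1 : Fin 3), i, j₀), hi, rfl, rfl⟩
      obtain ⟨t, ht, htj, -⟩ := hER j hw
      obtain ⟨t', ht', htj', -⟩ := hER j' hw'
      rw [← hz] at ht'
      by_contra hjj'
      have hed := R.eDisj (sym t) (sym_mem t) (sym t') (sym_mem t')
        (fun hceq => hjj' (by rw [← htj, ← htj', sym_inj hceq]))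
      exact Set.disjoint_left.1 hed ht ht'
  have hcard := Fintype.card_le_of_injective f hinj
  rw [ZMod.card] at hcard
  rw [Fintype.card_prod, Fintype.card_coe, Fintype.card_bool] at hcard
  have : nn h = 2 * h + 4 := rfl
  omega

lemma UU_subset_diff (Z : Finset V) : UU R Z ⊆ SS R \ ↑Z := by
  intro v hv
  refine ⟨UU_subset_SS R Z hv, fun hc => ?_⟩
  have := UU_disj R Z
  rw [Set.eq_empty_iff_forall_notMem] at this
  exact this v ⟨hv, hc⟩

noncomputable def base (Z : Finset V) (hZ : Z.card ≤ h) : V :=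
  (UU_nonempty R Z (free_rows_exist R Z hZ)).some

lemma base_mem (Z : Finset V) (hZ : Z.card ≤ h) : base R Z hZ ∈ UU R Z :=
  Set.Nonempty.some_mem _

noncomputable def BB (Z : Finset V) : Set V :=
  if hZ : Z.card ≤ h then CompAt (Adj' R) (SS R \ ↑Z) (base R Z hZ) else ∅

lemma haven_main : IsHavenOn (Adj' R) (SS R) (h + 1) (BB R) := by
  intro Z hZS hZcard
  have hZ : Z.card ≤ h := by omega
  constructor
  · rw [BB, dif_pos hZ]
    exact isStrongComponent_compAt (UU_subset_diff R Z (base_mem R Z hZ))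
  · intro Z' hZ'Z
    have hZ' : Z'.card ≤ h := le_trans (Finset.card_le_card hZ'Z) hZ
    rw [BB, dif_pos hZ, BB, dif_pos hZ']
    have hUZ' : StrongOn (Adj' R) (UU R Z') :=
      UU_strong R Z' (free_rows_exist R Z' hZ') (free_cols_exist R Z' hZ')
    have hb : base R Z hZ ∈ UU R Z' := UU_anti R hZ'Z (base_mem R Z hZ)
    have hb' : base R Z' hZ' ∈ UU R Z' := base_mem R Z' hZ'
    have hsub : UU R Z' ⊆ SS R \ ↑Z' := UU_subset_diff R Z'
    refine compAt_subset_compAt ?_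
      (reach_mono_set hsub (hUZ' _ hb' _ hb))
      (reach_mono_set hsub (hUZ' _ hb _ hb'))
    exact Set.diff_subset_diff_right (Finset.coe_subset.2 hZ'Z)

lemma SS_strong : StrongOn (Adj' R) (SS R) := by
  rw [SS_eq_UU_empty R]
  exact UU_strong R ∅ ⟨0, by simp⟩ ⟨0, by simp⟩

lemma eul_main : Eulerianizable (Adj' R) (SS R) 5 := by
  refine ⟨SS_strong R, mT R, fun u v hA => hA, fun u v hn => Nat.eq_zero_of_not_pos hn,
    fun v _ => ⟨mT_in_eq_out R v, mT_out_le R v⟩⟩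

end Construction4
end S7


/-- For every `h ≥ 1` there is `k` such that every finite digraph having a
representation of the complete graph `K_k` has a `5`-eulerianizable subdigraph with a haven
of order at least `h + 1`. -/
theorem clique_rep_gives_eulerianizable_haven (h : ℕ) (hh : 0 < h) :
    ∃ k : ℕ, 0 < k ∧
      ∀ (V : Type) [Fintype V] [DecidableEq V] (A : V → V → Prop),
        Nonempty (DigraphRep V A (⊤ : SimpleGraph (Fin k))) →
        ∃ (S : Set V) (A' : V → V → Prop),
          IsSubdigraph A S A' ∧ Eulerianizable A' S 5 ∧
          ∃ w, h + 1 ≤ w ∧ HasHavenOn A' S w := by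
  refine ⟨S7.kk h, S7.kk_pos h, ?_⟩
  intro V _ _ A hR
  obtain ⟨R⟩ := hR
  exact ⟨S7.SS R, S7.Adj' R, S7.adj'_subdigraph R, S7.eul_main R,
    h + 1, le_rfl, S7.BB R, S7.haven_main R⟩
end

section
/- Let n be a positive integer and let D′ be a finite digraph that is the union of strongly connected subdigraphs H₁, …, H_m with m ≥ 2n + 1, such that any two of the subdigraphs H_i, H_j share at least one vertex and every vertex of D′ belongs to at most two of the subdigraphs H₁, …, H_m. Then D′ has a haven of order n + 1. -/
/-- Reachability within `S`. -/
def Reach {V : Type*} (A : V → V → Prop) (S : Set V) : V → V → Prop :=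
  Relation.ReflTransGen (fun x y => A x y ∧ x ∈ S ∧ y ∈ S)

lemma Reach.mono {V : Type*} {A : V → V → Prop} {S T : Set V} (hST : S ⊆ T)
    {u v : V} (h : Reach A S u v) : Reach A T u v :=
  Relation.ReflTransGen.mono (r := fun x y => A x y ∧ x ∈ S ∧ y ∈ S)
    (p := fun x y => A x y ∧ x ∈ T ∧ y ∈ T) (fun _ _ h => ⟨h.1, hST h.2.1, hST h.2.2⟩) _ _ h

lemma chain'_reach {V : Type*} {A : V → V → Prop} {S : Set V} :
    ∀ (l : List V), l.Chain' A → (∀ x ∈ l, x ∈ S) → ∀ {u v : V},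
      l.head? = some u → l.getLast? = some v → Reach A S u v := by
  intro l
  induction l with
  | nil => intro _ _ u v h; simp at h
  | cons a t ih =>
    intro hc hmem u v hh hl
    rw [List.head?_cons, Option.some_inj] at hh
    subst hh
    cases t with
    | nil =>
      simp at hl; subst hl; exact Relation.ReflTransGen.refl
    | cons b t' =>
      change List.IsChain A _ at hc; rw [List.isChain_cons_cons] at hc
      refine Relation.ReflTransGen.head ⟨hc.1, hmem a (by simp), hmem b (by simp)⟩ ?_
      exact ih hc.2 (fun x hx => hmem x (List.mem_cons_of_mem a hx)) rfl
        (by rwa [List.getLast?_cons_cons] at hl)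

lemma dipathIn_reach {V : Type*} {A : V → V → Prop} {S : Set V} {l : List V} {u v : V}
    (h : DipathIn A S l) (hh : l.head? = some u) (hl : l.getLast? = some v) :
    Reach A S u v :=
  chain'_reach l h.1.2.2 h.2 hh hl

lemma reach_dipath {V : Type*} {A : V → V → Prop} {S : Set V} {u v : V}
    (hu : u ∈ S) (h : Reach A S u v) :
    ∃ l, DipathIn A S l ∧ l.head? = some u ∧ l.getLast? = some v := by
  induction h using Relation.ReflTransGen.head_induction_on with
  | refl => exact ⟨[v], ⟨⟨by simp, by simp, List.isChain_singleton _⟩, by simpa using hu⟩, by simp, by simp⟩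
  | head h' _ ih =>
    obtain ⟨e, haS, hbS⟩ := h'
    obtain ⟨l, ⟨⟨hne, hnd, hch⟩, hmem⟩, hh, hl⟩ := ih hbS
    rename_i a b _
    by_cases hal : a ∈ l
    · obtain ⟨p, q, rfl⟩ := List.append_of_mem hal
      refine ⟨a :: q, ⟨⟨by simp, ?_, hch.suffix ⟨p, rfl⟩⟩, ?_⟩, by simp, ?_⟩
      · exact hnd.sublist (List.sublist_append_right p (a :: q))
      · intro x hx; exact hmem x (List.mem_append.2 (Or.inr hx))
      · rw [List.getLast?_append] at hl
        cases hq : (a :: q).getLast? with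
        | none => simp at hq
        | some w =>
          rw [hq] at hl; simp at hl; exact congrArg some hl
    · refine ⟨a :: l, ⟨⟨by simp, by simp [hnd, hal], ?_⟩, ?_⟩, by simp, ?_⟩
      · change List.IsChain A _; rw [List.isChain_cons]
        exact ⟨fun y hy => by rw [hh] at hy; simp at hy; rwa [← hy], hch⟩
      · intro x hx; rcases List.mem_cons.1 hx with rfl | hx
        · exact haS
        · exact hmem x hx
      · cases l with
        | nil => simp at hh
        | cons c t => rwa [List.getLast?_cons_cons]

lemma dipath_split {V : Type*} {A : V → V → Prop} {S : Set V} {l : List V} {u v w : V}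
    (h : DipathIn A S l) (hh : l.head? = some u) (hl : l.getLast? = some v) (hw : w ∈ l) :
    Reach A S u w ∧ Reach A S w v := by
  obtain ⟨p, q, rfl⟩ := List.append_of_mem hw
  constructor
  · refine chain'_reach (p ++ [w]) (h.1.2.2.prefix ⟨q, by simp⟩)
      (fun x hx => h.2 x (by simp at hx ⊢; tauto)) ?_ (by simp)
    rw [List.head?_append] at hh ⊢
    cases p with
    | nil => simpa using hh
    | cons c t => simpa using hh
  · refine chain'_reach (w :: q) (h.1.2.2.suffix ⟨p, rfl⟩)
      (fun x hx => h.2 x (by simp at hx ⊢; tauto)) (by simp) ?_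
    rw [List.getLast?_append] at hl
    cases hq : (w :: q).getLast? with
    | none => simp at hq
    | some x => rw [hq] at hl; simp at hl; exact congrArg some hl

/-- The strong component containing `v`. -/
def compSet {V : Type*} (A : V → V → Prop) (W : Set V) (v : V) : Set V :=
  {u | u ∈ W ∧ Reach A W v u ∧ Reach A W u v}

lemma isStrongComponent_compSet {V : Type*} {A : V → V → Prop} {W : Set V} {v : V}
    (hv : v ∈ W) : IsStrongComponent A W (compSet A W v) := by
  refine ⟨fun u hu => hu.1, ⟨v, hv, .refl, .refl⟩, ?_, ?_⟩
  · intro u₁ hu₁ u₂ hu₂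
    obtain ⟨l, hl, hh, hlast⟩ := reach_dipath hu₁.1 (hu₁.2.2.trans hu₂.2.1)
    refine ⟨l, ⟨hl.1, fun x hx => ?_⟩, hh, hlast⟩
    obtain ⟨h1, h2⟩ := dipath_split hl hh hlast hx
    exact ⟨hl.2 x hx, hu₁.2.1.trans h1, h2.trans hu₂.2.2⟩
  · intro C' hsub hCW hstr
    refine le_antisymm ?_ hsub
    intro u hu
    have hvC : v ∈ C' := hsub ⟨hv, .refl, .refl⟩
    obtain ⟨l₁, hl₁, hh₁, ht₁⟩ := hstr v hvC u hu
    obtain ⟨l₂, hl₂, hh₂, ht₂⟩ := hstr u hu v hvC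
    have toW : ∀ {l : List V}, DipathIn A C' l → DipathIn A W l :=
      fun h => ⟨h.1, fun x hx => hCW (h.2 x hx)⟩
    exact ⟨hCW hu, dipathIn_reach (toW hl₁) hh₁ ht₁, dipathIn_reach (toW hl₂) hh₂ ht₂⟩

/-- If a finite digraph `D'` is the union of `m ≥ 2n + 1` strongly
connected subdigraphs, any two of which share a vertex and such that every vertex of `D'`
lies in at most two of them, then `D'` has a haven of order `n + 1`. -/
theorem union_of_pairwise_meeting_strong_subdigraphs_haven
    {V : Type} [Fintype V] [DecidableEq V] (n m : ℕ) (hn : 0 < n)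
    (hm : 2 * n + 1 ≤ m) (A : V → V → Prop)
    (hS : Fin m → Set V) (hA : Fin m → V → V → Prop)
    (hsub : ∀ i, IsSubdigraph A (hS i) (hA i))
    (hstrong : ∀ i, StrongOn (hA i) (hS i))
    (hcoverV : ∀ v : V, ∃ i, v ∈ hS i)
    (hcoverE : ∀ u v, A u v → ∃ i, hA i u v)
    (hshare : ∀ i j, (hS i ∩ hS j).Nonempty)
    (htwo : ∀ v : V, ({i : Fin m | v ∈ hS i}).ncard ≤ 2) :
    HasHaven A (n + 1) := by
  classical
  have i0 : Fin m := ⟨0, by omega⟩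
  obtain ⟨v00, hv00⟩ := hshare i0 i0
  haveI : Nonempty V := ⟨v00⟩
  -- a vertex is `Good` for `Z` if it lies in some `hS i` disjoint from `Z`
  let Good : Finset V → V → Prop := fun Z v => ∃ i, v ∈ hS i ∧ ∀ z ∈ Z, z ∉ hS i
  have hmemW : ∀ (Z : Finset V) (v : V), Good Z v → v ∈ Set.univ \ (↑Z : Set V) := by
    rintro Z v ⟨i, hvi, hi⟩
    exact ⟨trivial, fun hz => hi v (Finset.mem_coe.1 hz) hvi⟩
  -- any two good vertices reach each other avoiding Z
  have hgood_reach : ∀ (Z : Finset V) (v w : V), Good Z v → Good Z w →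
      Reach A (Set.univ \ (↑Z : Set V)) v w := by
    rintro Z v w ⟨i, hvi, hiZ⟩ ⟨j, hwj, hjZ⟩
    obtain ⟨x, hxi, hxj⟩ := hshare i j
    have key : ∀ (k : Fin m), (∀ z ∈ Z, z ∉ hS k) → ∀ a ∈ hS k, ∀ b ∈ hS k,
        Reach A (Set.univ \ (↑Z : Set V)) a b := by
      intro k hk a ha b hb
      obtain ⟨l, hl, hh, ht⟩ := hstrong k a ha b hb
      refine dipathIn_reach ⟨⟨hl.1.1, hl.1.2.1, hl.1.2.2.imp (fun a b hab => (hsub k a b hab).1)⟩,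
        fun y hy => ?_⟩ hh ht
      have hyk : y ∈ hS k := hl.2 y hy
      exact ⟨trivial, fun hz => hk y (Finset.mem_coe.1 hz) hyk⟩
    exact (key i hiZ v hvi x hxi).trans (key j hjZ x hxj w hwj)
  -- counting: a good vertex exists whenever |Z| ≤ n
  have hexists : ∀ Z : Finset V, Z.card ≤ n → ∃ v, Good Z v := by
    intro Z hZ
    have hfilter : ∀ z : V, (Finset.univ.filter (fun i => z ∈ hS i)).card ≤ 2 := by
      intro z
      have he : ({i : Fin m | z ∈ hS i}) =
          ↑(Finset.univ.filter (fun i => z ∈ hS i)) := by ext i; simp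
      have := htwo z
      rwa [he, Set.ncard_coe_finset] at this
    set F : Finset (Fin m) := Finset.univ.filter (fun i => ∃ z ∈ Z, z ∈ hS i) with hFdef
    have hFcard : F.card ≤ 2 * Z.card := by
      have hsub2 : F ⊆ Z.biUnion (fun z => Finset.univ.filter (fun i => z ∈ hS i)) := by
        intro i hi
        rw [hFdef, Finset.mem_filter] at hi
        obtain ⟨z, hz, hzi⟩ := hi.2
        exact Finset.mem_biUnion.2 ⟨z, hz, by simp [hzi]⟩
      calc F.card ≤ (Z.biUnion (fun z => Finset.univ.filter (fun i => z ∈ hS i))).card :=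
            Finset.card_le_card hsub2
        _ ≤ ∑ z ∈ Z, (Finset.univ.filter (fun i => z ∈ hS i)).card := Finset.card_biUnion_le
        _ ≤ ∑ _z ∈ Z, 2 := Finset.sum_le_sum (fun z _ => hfilter z)
        _ = 2 * Z.card := by rw [Finset.sum_const, smul_eq_mul, mul_comm]
    have hFne : F ≠ Finset.univ := by
      intro h
      have : F.card = m := by rw [h, Finset.card_univ, Fintype.card_fin]
      omega
    obtain ⟨i, hi⟩ : ∃ i, i ∉ F := by
      by_contra h
      push_neg at h
      exact hFne (Finset.eq_univ_iff_forall.2 h)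
    rw [hFdef, Finset.mem_filter] at hi
    push_neg at hi
    obtain ⟨v, hv, -⟩ := hshare i i
    exact ⟨v, i, hv, fun z hz => hi (Finset.mem_univ i) z hz⟩
  -- the haven
  refine ⟨fun Z => compSet A (Set.univ \ (↑Z : Set V)) (Classical.epsilon (Good Z)), ?_⟩
  intro Z hZsub hZcard
  have hZn : Z.card ≤ n := by omega
  have hvZ : Good Z (Classical.epsilon (Good Z)) := Classical.epsilon_spec (hexists Z hZn)
  refine ⟨isStrongComponent_compSet (hmemW Z _ hvZ), ?_⟩
  intro Z' hZ'Z u hu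
  have hmono : ∀ w, Good Z w → Good Z' w :=
    fun w ⟨i, hwi, hi⟩ => ⟨i, hwi, fun z hz => hi z (hZ'Z hz)⟩
  have hv' : Good Z' (Classical.epsilon (Good Z')) :=
    Classical.epsilon_spec ⟨_, hmono _ hvZ⟩
  have hWW' : (Set.univ \ (↑Z : Set V)) ⊆ (Set.univ \ (↑Z' : Set V)) :=
    Set.diff_subset_diff_right (by exact_mod_cast hZ'Z)
  obtain ⟨huW, hr1, hr2⟩ := hu
  exact ⟨hWW' huW,
    (hgood_reach Z' _ _ hv' (hmono _ hvZ)).trans (hr1.mono hWW'),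
    (hr2.mono hWW').trans (hgood_reach Z' _ _ (hmono _ hvZ) hv')⟩
end
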